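/- Every convex lattice polygon in R^2 with at least 5 edges contains at least one interior lattice point. -/

import Mathlib

open Set


def toR (p : ℤ × ℤ) : ℝ × ℝ := ((p.1 : ℝ), (p.2 : ℝ))

lemma toR_inj : Function.Injective toR := by
  intro a b h
  simp only [toR, Prod.mk.injEq] at h
  exact Prod.ext (by exact_mod_cast h.1) (by exact_mod_cast h.2)

def isq (v : ℤ × ℤ) : ℤ := v.1 ^ 2 + v.2 ^ 2

lemma isq_nonneg (v : ℤ × ℤ) : 0 ≤ isq v := by unfold isq; positivity

lemma extreme_mono {A B : Set (ℝ × ℝ)} (hAB : A ⊆ B) {x : ℝ × ℝ}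
    (hxB : x ∈ B.extremePoints ℝ) (hxA : x ∈ A) : x ∈ A.extremePoints ℝ := by
  rw [mem_extremePoints] at hxB ⊢
  exact ⟨hxA, fun y hy z hz hseg => hxB.2 _ (hAB hy) _ (hAB hz) hseg⟩

lemma not_collinear_of_extreme {A : Set (ℝ × ℝ)} {x y z : ℝ × ℝ}
    (hx : x ∈ A.extremePoints ℝ) (hy : y ∈ A.extremePoints ℝ) (hz : z ∈ A.extremePoints ℝ)
    (hxy : x ≠ y) (hxz : x ≠ z) (hyz : y ≠ z) :
    ¬ Collinear ℝ ({x, y, z} : Set (ℝ × ℝ)) := by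
  have aux : ∀ a b c : ℝ × ℝ, a ∈ A.extremePoints ℝ → b ∈ A.extremePoints ℝ →
      c ∈ A.extremePoints ℝ → a ≠ b → b ≠ c → Wbtw ℝ a b c → False := by
    intro a b c ha hb hc hab hbc hw
    rcases (mem_extremePoints_iff_forall_segment.1 hb).2 _ ha.1 _ hc.1 hw.mem_segment with h' | h'
    · exact hab h'
    · exact hbc h'.symm
  intro h
  rcases h.wbtw_or_wbtw_or_wbtw with hw | hw | hw
  · exact aux _ _ _ hx hy hz hxy hyz hw
  · exact aux _ _ _ hy hz hx hyz hxz.symm hw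
  · exact aux _ _ _ hz hx hy hxz.symm hxy hw

lemma mem_extremePoints_convexHull_of_not_mem {s : Set (ℝ × ℝ)} {x : ℝ × ℝ} (hxs : x ∈ s)
    (hx : x ∉ convexHull ℝ (s \ {x})) : x ∈ (convexHull ℝ s).extremePoints ℝ := by
  rw [mem_extremePoints_iff_forall_segment]
  refine ⟨subset_convexHull ℝ s hxs, ?_⟩
  intro y hy z hz hseg
  by_contra hcon
  push_neg at hcon
  obtain ⟨hyx, hzx⟩ := hcon
  have hs : s = insert x (s \ {x}) := by
    rw [Set.insert_diff_singleton, Set.insert_eq_self.2 hxs]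
  rcases Set.eq_empty_or_nonempty (s \ {x}) with he | hne
  · have hsx : s = {x} := by rw [hs, he]; simp
    rw [hsx, convexHull_singleton] at hy
    exact hyx hy
  · rw [hs, convexHull_insert hne, mem_convexJoin] at hy hz
    simp only [Set.mem_singleton_iff, exists_eq_left] at hy hz
    obtain ⟨y', hy', hyseg⟩ := hy
    obtain ⟨z', hz', hzseg⟩ := hz
    obtain ⟨a₁, a₂, ha₁, ha₂, ha, rfl⟩ := hyseg
    obtain ⟨b₁, b₂, hb₁, hb₂, hb, rfl⟩ := hzseg
    obtain ⟨t, u, ht, hu, htu, hx'⟩ := hseg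
    have ht0 : 0 < t := by
      rcases ht.lt_or_eq with h | h
      · exact h
      · exfalso
        have hu1 : u = 1 := by linarith
        rw [← h, zero_smul, zero_add, hu1, one_smul] at hx'
        exact hzx hx'
    have hu0 : 0 < u := by
      rcases hu.lt_or_eq with h | h
      · exact h
      · exfalso
        have ht1 : t = 1 := by linarith
        rw [← h, zero_smul, add_zero, ht1, one_smul] at hx'
        exact hyx hx'
    set d : ℝ := t * a₂ + u * b₂ with hd
    rcases eq_or_lt_of_le (show (0:ℝ) ≤ d by positivity) with hd0 | hd0
    · have h1 : t * a₂ = 0 := by nlinarith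
      have ha₂0 : a₂ = 0 := by
        rcases mul_eq_zero.1 h1 with h | h
        · exact absurd h ht0.ne'
        · exact h
      have ha₁1 : a₁ = 1 := by linarith
      apply hyx
      rw [ha₁1, ha₂0]; simp
    · apply hx
      have hxx : d • x = (t * a₂) • y' + (u * b₂) • z' := by
        have h3 : d = 1 - (t * a₁ + u * b₁) := by
          linear_combination t * ha + u * hb + htu
        rw [h3]
        linear_combination (norm := module) -hx'
      have hxd : x = (t * a₂ / d) • y' + (u * b₂ / d) • z' := by
        have h4 : x = d⁻¹ • (d • x) := by
          rw [smul_smul, inv_mul_cancel₀ hd0.ne', one_smul]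
        rw [h4, hxx]
        match_scalars <;> field_simp
      have hmem : (t * a₂ / d) • y' + (u * b₂ / d) • z' ∈ convexHull ℝ (s \ {x}) := by
        refine (convex_convexHull ℝ _) hy' hz' ?_ ?_ ?_
        · positivity
        · positivity
        · rw [← add_div, div_eq_one_iff_eq hd0.ne']
      rwa [← hxd] at hmem

lemma finrank_R2 : Module.finrank ℝ (ℝ × ℝ) = 2 := by
  rw [Module.finrank_prod, Module.finrank_self]

lemma collinear_of_level {f : (ℝ × ℝ) →L[ℝ] ℝ} {c : ℝ} (hf : ∃ w : ℝ × ℝ, f w ≠ c)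
    {u v w : ℝ × ℝ} (hu : f u = c) (hv : f v = c) (hw : f w = c) :
    Collinear ℝ ({u, v, w} : Set (ℝ × ℝ)) := by
  obtain ⟨w₀, hw₀⟩ := hf
  have hfne : (f : (ℝ × ℝ) →ₗ[ℝ] ℝ) ≠ 0 := by
    intro h
    have hz : ∀ x : ℝ × ℝ, f x = 0 := fun x => by
      have := LinearMap.congr_fun h x; simpa using this
    exact hw₀ (by rw [hz w₀, ← hu, hz u])
  have hker : vectorSpan ℝ ({u, v, w} : Set (ℝ × ℝ)) ≤
      LinearMap.ker (f : (ℝ × ℝ) →ₗ[ℝ] ℝ) := by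
    rw [vectorSpan_def]
    refine Submodule.span_le.2 ?_
    rintro x ⟨a, ha, b, hb, rfl⟩
    have hfa : f a = c := by rcases ha with rfl | rfl | rfl <;> assumption
    have hfb : f b = c := by rcases hb with rfl | rfl | rfl <;> assumption
    simp only [SetLike.mem_coe, LinearMap.mem_ker]
    show f (a -ᵥ b) = 0
    rw [vsub_eq_sub, map_sub, hfa, hfb, sub_self]
  have hrange : Module.finrank ℝ (LinearMap.range (f : (ℝ × ℝ) →ₗ[ℝ] ℝ)) = 1 := by
    have h1 : LinearMap.range (f : (ℝ × ℝ) →ₗ[ℝ] ℝ) ≠ ⊥ := by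
      rw [Submodule.ne_bot_iff]
      refine ⟨f (w₀ - u), ⟨w₀ - u, rfl⟩, ?_⟩
      rw [map_sub, hu]
      intro hcon
      exact hw₀ (by linarith [sub_eq_zero.1 hcon])
    have h2 : 1 ≤ Module.finrank ℝ (LinearMap.range (f : (ℝ × ℝ) →ₗ[ℝ] ℝ)) :=
      Submodule.one_le_finrank_iff.2 h1
    have h3 : Module.finrank ℝ (LinearMap.range (f : (ℝ × ℝ) →ₗ[ℝ] ℝ)) ≤ 1 := by
      simpa using Submodule.finrank_le (LinearMap.range (f : (ℝ × ℝ) →ₗ[ℝ] ℝ))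
    omega
  have hkerrank : Module.finrank ℝ (LinearMap.ker (f : (ℝ × ℝ) →ₗ[ℝ] ℝ)) ≤ 1 := by
    have := LinearMap.finrank_range_add_finrank_ker (f : (ℝ × ℝ) →ₗ[ℝ] ℝ)
    rw [finrank_R2, hrange] at this
    omega
  rw [collinear_iff_finrank_le_one]
  exact le_trans (Submodule.finrank_mono hker) hkerrank

lemma collinear_of_span_ne_top {s : Set (ℝ × ℝ)} (h : affineSpan ℝ s ≠ ⊤) :
    Collinear ℝ s := by
  rw [collinear_iff_finrank_le_one]
  have h1 : vectorSpan ℝ s ≠ ⊤ := by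
    intro ht
    rcases Set.eq_empty_or_nonempty s with he | hne
    · rw [he] at ht
      simp [vectorSpan_empty] at ht
    · exact h ((AffineSubspace.affineSpan_eq_top_iff_vectorSpan_eq_top_of_nonempty ℝ (ℝ × ℝ) (ℝ × ℝ) hne).2 ht)
  have := Submodule.finrank_lt h1
  rw [finrank_R2] at this
  omega

lemma key (n : ℕ) : ∀ (V : Finset (ℤ × ℤ)), (V.sum isq).toNat ≤ n → V.card = 5 →
    (∀ v ∈ V, toR v ∈ (convexHull ℝ (toR '' (V : Set (ℤ × ℤ)))).extremePoints ℝ) →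
    ∃ m : ℤ × ℤ, toR m ∈ interior (convexHull ℝ (toR '' (V : Set (ℤ × ℤ)))) := by
  induction n using Nat.strong_induction_on with
  | _ n ih =>
  intro V hsum hcard hext
  set A : Set (ℝ × ℝ) := toR '' (V : Set (ℤ × ℤ)) with hA
  set P : Set (ℝ × ℝ) := convexHull ℝ A with hP
  -- two vertices with the same parity, the farther one second
  obtain ⟨p, hpV, q, hqV, hpq, hdvd1, hdvd2, hsqle⟩ :
      ∃ p ∈ V, ∃ q ∈ V, p ≠ q ∧ (2:ℤ) ∣ (p.1 + q.1) ∧ (2:ℤ) ∣ (p.2 + q.2) ∧ isq p ≤ isq q := by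
    obtain ⟨p, hp, q, hq, hne, heq⟩ :=
      Finset.exists_ne_map_eq_of_card_lt_of_maps_to
        (t := (Finset.univ : Finset (ZMod 2 × ZMod 2)))
        (f := fun a : ℤ × ℤ => (((a.1 : ZMod 2), (a.2 : ZMod 2)) : ZMod 2 × ZMod 2))
        (by rw [hcard]; simp) (fun a _ => Finset.mem_univ _)
    have h1 : (2:ℤ) ∣ (p.1 + q.1) := by
      have := (Prod.ext_iff.1 heq).1
      have hmod := (ZMod.intCast_eq_intCast_iff _ _ _).1 this
      obtain ⟨k, hk⟩ := Int.ModEq.dvd hmod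
      exact ⟨p.1 + k, by omega⟩
    have h2 : (2:ℤ) ∣ (p.2 + q.2) := by
      have := (Prod.ext_iff.1 heq).2
      have hmod := (ZMod.intCast_eq_intCast_iff _ _ _).1 this
      obtain ⟨k, hk⟩ := Int.ModEq.dvd hmod
      exact ⟨p.2 + k, by omega⟩
    rcases le_total (isq p) (isq q) with h | h
    · exact ⟨p, hp, q, hq, hne, h1, h2, h⟩
    · exact ⟨q, hq, p, hp, hne.symm, by omega, by omega, h⟩
  obtain ⟨a, hax⟩ := hdvd1
  obtain ⟨b, hby⟩ := hdvd2
  set m : ℤ × ℤ := (a, b) with hm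
  have hmid : toR m = (1/2 : ℝ) • toR p + (1/2 : ℝ) • toR q := by
    have h1 : (a : ℝ) = ((p.1 : ℝ) + (q.1 : ℝ)) / 2 := by
      have : ((p.1 + q.1 : ℤ) : ℝ) = ((2 * a : ℤ) : ℝ) := by rw [hax]
      push_cast at this
      linarith
    have h2 : (b : ℝ) = ((p.2 : ℝ) + (q.2 : ℝ)) / 2 := by
      have : ((p.2 + q.2 : ℤ) : ℝ) = ((2 * b : ℤ) : ℝ) := by rw [hby]
      push_cast at this
      linarith
    simp only [toR, hm, Prod.ext_iff, Prod.smul_mk, Prod.mk_add_mk, smul_eq_mul]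
    constructor
    · rw [h1]; ring
    · rw [h2]; ring
  have hmp : m ≠ p := by
    intro h
    apply hpq
    rw [hm] at h
    have h1 : a = p.1 := by rw [← h]
    have h2 : b = p.2 := by rw [← h]
    have : p = q := by
      apply Prod.ext <;> omega
    exact this
  have hmq : m ≠ q := by
    intro h
    apply hpq
    rw [hm] at h
    have h1 : a = q.1 := by rw [← h]
    have h2 : b = q.2 := by rw [← h]
    exact Prod.ext (by omega) (by omega)
  have hpA : toR p ∈ A := ⟨p, hpV, rfl⟩
  have hqA : toR q ∈ A := ⟨q, hqV, rfl⟩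
  have hpP : toR p ∈ P := subset_convexHull ℝ A hpA
  have hqP : toR q ∈ P := subset_convexHull ℝ A hqA
  have hmP : toR m ∈ P := by
    have := (convex_convexHull ℝ A) hpP hqP (by norm_num : (0:ℝ) ≤ 1/2)
      (by norm_num : (0:ℝ) ≤ 1/2) (by norm_num : (1:ℝ)/2 + 1/2 = 1)
    rwa [← hmid] at this
  have hmseg : toR m ∈ segment ℝ (toR p) (toR q) :=
    ⟨1/2, 1/2, by norm_num, by norm_num, by norm_num, hmid.symm⟩
  have htRpq : toR p ≠ toR q := fun h => hpq (toR_inj h)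
  -- a third vertex
  obtain ⟨r, hr⟩ : ((V.erase p).erase q).Nonempty := by
    rw [← Finset.card_pos, Finset.card_erase_of_mem, Finset.card_erase_of_mem hpV, hcard]
    · omega
    · exact Finset.mem_erase.2 ⟨hpq.symm, hqV⟩
  have hrq : r ≠ q := (Finset.mem_erase.1 hr).1
  have hrp : r ≠ p := (Finset.mem_erase.1 (Finset.mem_erase.1 hr).2).1
  have hrV : r ∈ V := (Finset.mem_erase.1 (Finset.mem_erase.1 hr).2).2
  -- interior of P is nonempty
  have hPint : (interior P).Nonempty := by
    rw [hP, interior_convexHull_nonempty_iff_affineSpan_eq_top]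
    by_contra h
    have hcol := collinear_of_span_ne_top h
    exact not_collinear_of_extreme (hext p hpV) (hext q hqV) (hext r hrV)
      (fun h => hpq (toR_inj h)) (fun h => hrp (toR_inj h).symm) (fun h => hrq (toR_inj h).symm)
      (hcol.subset (by
        rintro x (rfl | rfl | rfl)
        exacts [hpA, hqA, ⟨r, hrV, rfl⟩]))
  obtain ⟨x0, hx0⟩ := hPint
  by_cases hmint : toR m ∈ interior P
  · exact ⟨m, hmint⟩
  -- separating functional
  obtain ⟨f, hfsep⟩ := geometric_hahn_banach_open_point
    ((convex_convexHull ℝ A).interior) isOpen_interior hmint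
  set c : ℝ := f (toR m) with hc
  have hfx0 : f x0 < c := hfsep x0 hx0
  have hle : ∀ x ∈ P, f x ≤ c := by
    intro x hxP
    by_contra hgt
    push_neg at hgt
    set t : ℝ := (f x - c) / (f x - f x0) with ht
    have hden : 0 < f x - f x0 := by linarith
    have ht0 : 0 < t := div_pos (by linarith) hden
    have ht1 : t ≤ 1 := (div_le_one hden).2 (by linarith)
    have hpt : x + t • (x0 - x) ∈ interior P :=
      (convex_convexHull ℝ A).add_smul_sub_mem_interior hxP hx0 ⟨ht0, ht1⟩
    have := hfsep _ hpt
    rw [map_add, map_smul, map_sub, smul_eq_mul] at this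
    rw [ht] at this
    have hexp : f x + (f x - c) / (f x - f x0) * (f x0 - f x) = c := by
      field_simp
      ring
    linarith [hexp]
  have hfm : (1/2 : ℝ) * f (toR p) + (1/2 : ℝ) * f (toR q) = c := by
    rw [hc, hmid, map_add, map_smul, map_smul, smul_eq_mul, smul_eq_mul]
  have hfp : f (toR p) = c := by
    have h1 := hle _ hpP
    have h2 := hle _ hqP
    linarith
  have hfq : f (toR q) = c := by
    have h1 := hle _ hpP
    linarith
  -- vertices on the line f = c are only p and q
  have honly : ∀ v ∈ V, f (toR v) = c → v = p ∨ v = q := by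
    intro v hvV hfv
    by_contra hcon
    push_neg at hcon
    obtain ⟨hvp, hvq⟩ := hcon
    have hcol : Collinear ℝ ({toR p, toR q, toR v} : Set (ℝ × ℝ)) :=
      collinear_of_level ⟨x0, by linarith⟩ hfp hfq hfv
    exact not_collinear_of_extreme (hext p hpV) (hext q hqV) (hext v hvV)
      (fun h => hpq (toR_inj h)) (fun h => hvp (toR_inj h).symm)
      (fun h => hvq (toR_inj h).symm) hcol
  -- m is not in the hull of the other vertices
  have hnotin : toR m ∉ convexHull ℝ (toR '' ((V.erase q : Finset (ℤ × ℤ)) : Set (ℤ × ℤ))) := by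
    intro hmem
    set T : Finset (ℝ × ℝ) := (V.erase q).image toR with hT
    have hTcoe : ((T : Finset (ℝ × ℝ)) : Set (ℝ × ℝ)) =
        toR '' ((V.erase q : Finset (ℤ × ℤ)) : Set (ℤ × ℤ)) := by
      rw [hT, Finset.coe_image]
    rw [← hTcoe, Finset.convexHull_eq] at hmem
    obtain ⟨w, hw0, hw1, hcm⟩ := hmem
    rw [Finset.centerMass_eq_of_sum_1 _ _ hw1] at hcm
    have hTsub : ∀ y ∈ T, y ∈ P := by
      intro y hy
      rw [hT, Finset.mem_image] at hy
      obtain ⟨v, hv, rfl⟩ := hy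
      exact subset_convexHull ℝ A ⟨v, Finset.mem_of_mem_erase hv, rfl⟩
    have hpT : toR p ∈ T := by
      rw [hT, Finset.mem_image]
      exact ⟨p, Finset.mem_erase.2 ⟨hpq, hpV⟩, rfl⟩
    have hzero : ∀ y ∈ T, y ≠ toR p → w y = 0 := by
      intro y hyT hyne
      have hsum0 : ∑ y ∈ T, w y * (c - f y) = 0 := by
        have h1 : ∑ y ∈ T, w y * c = c := by
          rw [← Finset.sum_mul, hw1, one_mul]
        have h2 : ∑ y ∈ T, w y * f y = c := by
          have : f (∑ y ∈ T, w y • id y) = c := by rw [hcm]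
          rw [map_sum] at this
          simpa [smul_eq_mul] using this
        simp only [mul_sub]
        rw [Finset.sum_sub_distrib, h1, h2, sub_self]
      have heach := (Finset.sum_eq_zero_iff_of_nonneg (fun y hy =>
        mul_nonneg (hw0 y hy) (by linarith [hle y (hTsub y hy)]))).1 hsum0 y hyT
      rcases mul_eq_zero.1 heach with h | h
      · exact h
      · exfalso
        have hfy : f y = c := by linarith
        rw [hT, Finset.mem_image] at hyT
        obtain ⟨v, hv, rfl⟩ := hyT
        rcases honly v (Finset.mem_of_mem_erase hv) hfy with rfl | rfl
        · exact hyne rfl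
        · exact (Finset.mem_erase.1 hv).1 rfl
    have hmeq : toR m = toR p := by
      have h1 : ∑ y ∈ T, w y • id y = w (toR p) • toR p := by
        refine Finset.sum_eq_single_of_mem _ hpT ?_
        intro y hy hyne
        rw [hzero y hy hyne, zero_smul]
      have h2 : w (toR p) = 1 := by
        rw [← hw1]
        refine (Finset.sum_eq_single_of_mem _ hpT ?_).symm
        intro y hy hyne
        exact hzero y hy hyne
      rw [← hcm, h1, h2, one_smul]
    exact hmp (toR_inj hmeq)
  -- the new vertex set
  have hmnotV : m ∉ V := by
    intro hmV
    have := (mem_extremePoints_iff_forall_segment.1 (hext m hmV)).2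
      _ hpP _ hqP hmseg
    rcases this with h | h
    · exact hmp (toR_inj h).symm
    · exact hmq (toR_inj h).symm
  set W : Finset (ℤ × ℤ) := insert m (V.erase q) with hW
  have hmnotE : m ∉ V.erase q := fun h => hmnotV (Finset.mem_of_mem_erase h)
  have hWcard : W.card = 5 := by
    rw [hW, Finset.card_insert_of_notMem hmnotE, Finset.card_erase_of_mem hqV, hcard]
  have hWsub : toR '' ((W : Finset (ℤ × ℤ)) : Set (ℤ × ℤ)) ⊆ P := by
    rw [hW, Finset.coe_insert, Set.image_insert_eq]
    rintro x (rfl | hx)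
    · exact hmP
    · obtain ⟨v, hv, rfl⟩ := hx
      exact subset_convexHull ℝ A ⟨v, Finset.mem_of_mem_erase hv, rfl⟩
  have hWhull : convexHull ℝ (toR '' ((W : Finset (ℤ × ℤ)) : Set (ℤ × ℤ))) ⊆ P :=
    convexHull_min hWsub (convex_convexHull ℝ A)
  have hWext : ∀ v ∈ W, toR v ∈
      (convexHull ℝ (toR '' ((W : Finset (ℤ × ℤ)) : Set (ℤ × ℤ)))).extremePoints ℝ := by
    intro v hvW
    rw [hW, Finset.mem_insert] at hvW
    rcases hvW with hvm | hvE
    · subst hvm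
      apply mem_extremePoints_convexHull_of_not_mem
      · exact ⟨m, by rw [hW]; simp, rfl⟩
      · intro hcon
        apply hnotin
        refine convexHull_mono ?_ hcon
        intro x hx
        obtain ⟨⟨u, huW, rfl⟩, hxne⟩ := hx
        rw [hW, Finset.coe_insert, Set.mem_insert_iff] at huW
        rcases huW with rfl | hu
        · exact absurd rfl hxne
        · exact ⟨u, hu, rfl⟩
    · apply extreme_mono hWhull (hext v (Finset.mem_of_mem_erase hvE))
      exact subset_convexHull ℝ _
        ⟨v, by rw [hW]; exact Finset.mem_coe.2 (Finset.mem_insert_of_mem hvE), rfl⟩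
  -- the measure decreases
  have hsqm : isq m < isq q := by
    have hne2 : (p.1 - q.1)^2 + (p.2 - q.2)^2 > 0 := by
      have h : p.1 ≠ q.1 ∨ p.2 ≠ q.2 := by
        by_contra hc
        push_neg at hc
        exact hpq (Prod.ext hc.1 hc.2)
      rcases h with h' | h'
      · have h0 : p.1 - q.1 ≠ 0 := by omega
        nlinarith [pow_two_pos_of_ne_zero h0, sq_nonneg (p.2 - q.2)]
      · have h0 : p.2 - q.2 ≠ 0 := by omega
        nlinarith [pow_two_pos_of_ne_zero h0, sq_nonneg (p.1 - q.1)]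
    have h4 : 4 * (a^2 + b^2) = (p.1 + q.1)^2 + (p.2 + q.2)^2 := by
      rw [hax, hby]; ring
    have e2 : isq p = p.1^2 + p.2^2 := rfl
    have e3 : isq q = q.1^2 + q.2^2 := rfl
    have em : isq m = a^2 + b^2 := rfl
    rw [em, e3]
    rw [e2, e3] at hsqle
    nlinarith [hne2, h4, hsqle]
  have hsumW : W.sum isq < V.sum isq := by
    rw [hW, Finset.sum_insert hmnotE]
    have h5 := Finset.add_sum_erase V isq hqV
    have h6 : V.sum isq = ∑ x ∈ V, isq x := rfl
    omega
  have hsumnn : 0 ≤ W.sum isq := Finset.sum_nonneg fun v _ => isq_nonneg v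
  have hVnn : 0 ≤ V.sum isq := Finset.sum_nonneg fun v _ => isq_nonneg v
  obtain ⟨m', hm'⟩ := ih (W.sum isq).toNat (by omega) W le_rfl hWcard hWext
  exact ⟨m', interior_mono hWhull hm'⟩

/-- Arkinstall's lemma: every two-dimensional convex lattice polygon with at least 5
edges (equivalently, at least 5 vertices) contains an interior lattice point. -/
theorem stmt5 (S : Finset (ℤ × ℤ)) (P : Set (ℝ × ℝ))
    (hP : P = convexHull ℝ (toR '' (S : Set (ℤ × ℤ))))
    (hdim : (interior P).Nonempty)
    (hvert : 5 ≤ (Set.extremePoints ℝ P).ncard) :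
    ∃ m : ℤ × ℤ, toR m ∈ interior P := by
  classical
  have hconv : Convex ℝ P := hP ▸ convex_convexHull ℝ _
  have hTsub : P.extremePoints ℝ ⊆ toR '' (S : Set (ℤ × ℤ)) := by
    rw [hP]; exact extremePoints_convexHull_subset
  obtain ⟨t, htT, htcard⟩ := Set.exists_subset_card_eq hvert
  set V : Finset (ℤ × ℤ) := S.filter (fun v => toR v ∈ t) with hV
  have hVim : toR '' (V : Set (ℤ × ℤ)) = t := by
    have h1 : ((V : Set (ℤ × ℤ))) = (S : Set (ℤ × ℤ)) ∩ toR ⁻¹' t := by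
      ext x; simp [hV]
    rw [h1, Set.image_inter_preimage]
    exact Set.inter_eq_right.2 (htT.trans hTsub)
  have hVcard : V.card = 5 := by
    have h1 : (toR '' (V : Set (ℤ × ℤ))).ncard = V.card := by
      rw [Set.ncard_image_of_injective _ toR_inj, Set.ncard_coe_finset]
    rw [hVim, htcard] at h1
    exact h1.symm
  have hsubP : toR '' (V : Set (ℤ × ℤ)) ⊆ P := by
    rw [hVim]
    exact htT.trans extremePoints_subset
  have hhull : convexHull ℝ (toR '' (V : Set (ℤ × ℤ))) ⊆ P := convexHull_min hsubP hconv
  have hext : ∀ v ∈ V, toR v ∈ (convexHull ℝ (toR '' (V : Set (ℤ × ℤ)))).extremePoints ℝ := by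
    intro v hv
    refine extreme_mono hhull ?_ (subset_convexHull _ _ ⟨v, hv, rfl⟩)
    exact htT (hVim ▸ ⟨v, hv, rfl⟩)
  obtain ⟨m, hm⟩ := key (V.sum isq).toNat V le_rfl hVcard hext
  exact ⟨m, interior_mono hhull hm⟩
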